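/- Let d ≥ 1, let M be a real d×d matrix whose singular values satisfy σ_i(M) ≤ C·i^(−α) for all 1 ≤ i ≤ d, where C > 0 and α > 1/2. Then for every ε > 0, if r is a natural number with r ≥ (C²/((2α−1)·ε²))^(1/(2α−1)), there exists a real d×d matrix Δ with rank(Δ) ≤ r and ‖M − Δ‖_F ≤ ε. In particular, in the setting of the Representation Transfer Bound, taking M = W* − I (the deviation of the optimal linear aligner from the identity), a rank-r LoRA-style update Δ with ‖(W* − I) − Δ‖_F ≤ ε exists whenever r ≥ (C²/((2α−1)·ε²))^(1/(2α−1)). -/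

import Mathlib

open scoped BigOperators

/-- Frobenius norm of a real matrix. -/
noncomputable def frobNorm {m n : ℕ} (M : Matrix (Fin m) (Fin n) ℝ) : ℝ :=
  Real.sqrt (∑ i, ∑ j, (M i j) ^ 2)

/-- Singular values of a real `d × d` matrix, listed in decreasing order:
the square roots of the eigenvalues of `Mᵀ * M`, sorted decreasingly
(index `0` is the largest singular value `σ₁`). -/
noncomputable def singularValues {d : ℕ} (M : Matrix (Fin d) (Fin d) ℝ) : Fin d → ℝ :=
  fun i =>
    Real.sqrt
      (((show (Matrix.transpose M * M).IsHermitian by simpa using Matrix.isHermitian_conjTranspose_mul_self M).eigenvalues ∘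
          Tuple.sort ((show (Matrix.transpose M * M).IsHermitian by simpa using Matrix.isHermitian_conjTranspose_mul_self M).eigenvalues)) i.rev)

/-- Condition number of a Hermitian (e.g. positive definite) real matrix:
ratio of its largest to its smallest eigenvalue. -/
noncomputable def condNumber {d : ℕ} (A : Matrix (Fin d) (Fin d) ℝ)
    (hA : A.IsHermitian) : ℝ :=
  (⨆ i, hA.eigenvalues i) / (⨅ i, hA.eigenvalues i)


lemma aux_step (β : ℝ) (hβ : 0 < β) (x : ℝ) (hx : 0 < x) :
    β * (x + 1) ^ (-(β + 1)) ≤ x ^ (-β) - (x + 1) ^ (-β) := by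
  have hy : (0:ℝ) < x + 1 := by linarith
  have hxy : 0 < x / (x + 1) := div_pos hx hy
  -- core : 1 + β * (x+1)⁻¹ ≤ (x/(x+1)) ^ (-β)
  have hlog : (x + 1)⁻¹ ≤ Real.log ((x + 1) / x) := by
    have h := Real.one_sub_inv_le_log_of_pos (x := (x + 1) / x) (by positivity)
    have : ((x + 1) / x)⁻¹ = x / (x + 1) := by field_simp
    rw [this] at h
    have : 1 - x / (x + 1) = (x + 1)⁻¹ := by field_simp; ring
    linarith [this ▸ h]
  have core : 1 + β * (x + 1)⁻¹ ≤ (x / (x + 1)) ^ (-β) := by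
    rw [Real.rpow_def_of_pos hxy]
    have h1 : Real.log (x / (x + 1)) * -β = β * Real.log ((x + 1) / x) := by
      rw [Real.log_div (ne_of_gt hx) (ne_of_gt hy), Real.log_div (ne_of_gt hy) (ne_of_gt hx)]
      ring
    rw [h1]
    calc 1 + β * (x + 1)⁻¹ ≤ Real.exp (β * (x + 1)⁻¹) := by
          linarith [Real.add_one_le_exp (β * (x + 1)⁻¹)]
      _ ≤ Real.exp (β * Real.log ((x + 1) / x)) := by
          apply Real.exp_le_exp.mpr
          exact mul_le_mul_of_nonneg_left hlog hβ.le
  -- multiply by (x+1)^(-β)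
  have hpow : (0:ℝ) < (x + 1) ^ (-β) := Real.rpow_pos_of_pos hy _
  have hmul := mul_le_mul_of_nonneg_left core hpow.le
  have e1 : (x + 1) ^ (-β) * ((x / (x + 1)) ^ (-β)) = x ^ (-β) := by
    rw [← Real.mul_rpow hy.le hxy.le]
    congr 1
    field_simp
  have e2 : (x + 1) ^ (-β) * (1 + β * (x + 1)⁻¹) = (x + 1) ^ (-β) + β * (x + 1) ^ (-(β + 1)) := by
    have : (x + 1) ^ (-(β + 1)) = (x + 1) ^ (-β) * (x + 1)⁻¹ := by
      rw [show -(β + 1) = -β + (-1) by ring, Real.rpow_add hy, Real.rpow_neg_one]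
    rw [this]; ring
  rw [e2] at hmul
  rw [e1] at hmul
  linarith

lemma aux_tail (β : ℝ) (hβ : 0 < β) (r d : ℕ) (hr : 1 ≤ r) :
    ∑ i ∈ Finset.Ico r d, ((i : ℝ) + 1) ^ (-(β + 1)) ≤ (r : ℝ) ^ (-β) / β := by
  by_cases hrd : r ≤ d
  · have step : ∀ i ∈ Finset.Ico r d,
        ((i : ℝ) + 1) ^ (-(β + 1)) ≤ (((i:ℝ)) ^ (-β) - (((i:ℝ) + 1)) ^ (-β)) / β := by
      intro i hi
      rw [Finset.mem_Ico] at hi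
      have hx : (0:ℝ) < (i:ℝ) := by
        have : 1 ≤ i := le_trans hr hi.1
        exact_mod_cast this
      rw [le_div_iff₀ hβ, mul_comm]
      exact aux_step β hβ (i:ℝ) hx
    calc ∑ i ∈ Finset.Ico r d, ((i : ℝ) + 1) ^ (-(β + 1))
        ≤ ∑ i ∈ Finset.Ico r d, (((i:ℝ)) ^ (-β) - (((i:ℝ) + 1)) ^ (-β)) / β :=
          Finset.sum_le_sum step
      _ = (∑ i ∈ Finset.Ico r d, (((i:ℝ)) ^ (-β) - (((i:ℝ) + 1)) ^ (-β))) / β := by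
          rw [Finset.sum_div]
      _ ≤ (r : ℝ) ^ (-β) / β := by
          gcongr
          have tel : ∑ i ∈ Finset.Ico r d, (((i:ℝ)) ^ (-β) - (((i:ℝ) + 1)) ^ (-β))
              = (r : ℝ) ^ (-β) - (d : ℝ) ^ (-β) := by
            rw [Finset.sum_Ico_eq_sum_range]
            have tel2 := Finset.sum_range_sub' (f := fun j : ℕ => (((r + j : ℕ)):ℝ) ^ (-β)) (d - r)
            have hcongr : ∀ j ∈ Finset.range (d - r),
                (((r + j : ℕ)):ℝ) ^ (-β) - ((((r + j : ℕ)):ℝ) + 1) ^ (-β)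
                  = (((r + j : ℕ)):ℝ) ^ (-β) - (((r + (j + 1) : ℕ)):ℝ) ^ (-β) := by
              intro j _
              congr 2
              push_cast; ring
            rw [Finset.sum_congr rfl hcongr, tel2]
            have : r + (d - r) = d := by omega
            rw [this]
            norm_num
          rw [tel]
          have : (0:ℝ) ≤ (d : ℝ) ^ (-β) := Real.rpow_nonneg (by positivity) _
          linarith
  · rw [Finset.Ico_eq_empty (by omega)]
    simp
    positivity

open Matrix in
theorem exists_lowrank_aux {d : ℕ} (M : Matrix (Fin d) (Fin d) ℝ) (r : ℕ) :
    ∃ Δ : Matrix (Fin d) (Fin d) ℝ, Δ.rank ≤ r ∧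
      ∑ i, ∑ j, ((M - Δ) i j) ^ 2
        = ∑ i ∈ Finset.univ.filter (fun i : Fin d => r ≤ (i : ℕ)), (singularValues M i) ^ 2 := by
  classical
  set hA := (show (Matrix.transpose M * M).IsHermitian by simpa using Matrix.isHermitian_conjTranspose_mul_self M) with hAdef
  set U : Matrix (Fin d) (Fin d) ℝ := (hA.eigenvectorUnitary : Matrix (Fin d) (Fin d) ℝ) with hUdef
  set lam : Fin d → ℝ := hA.eigenvalues with hlamdef
  set sp := Tuple.sort lam with hspdef
  have hU1 : U * star U = 1 := Matrix.mem_unitaryGroup_iff.mp hA.eigenvectorUnitary.2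
  have hU1' : star U * U = 1 := Matrix.mem_unitaryGroup_iff'.mp hA.eigenvectorUnitary.2
  have hspec : Mᵀ * M = U * Matrix.diagonal lam * star U := by
    have h := hA.spectral_theorem
    simpa using h
  set c : Fin d → ℝ := fun k => if ((sp.symm k : Fin d) : ℕ) < d - r then 1 else 0 with hcdef
  set Q : Matrix (Fin d) (Fin d) ℝ := U * Matrix.diagonal c * star U with hQdef
  refine ⟨M * (U * Matrix.diagonal (fun k => 1 - c k) * star U), ?_, ?_⟩
  · -- rank bound
    refine le_trans (Matrix.rank_mul_le_right _ _) ?_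
    refine le_trans (Matrix.rank_mul_le_left _ _) ?_
    refine le_trans (Matrix.rank_mul_le_right _ _) ?_
    rw [Matrix.rank_diagonal]
    have : ∀ k : Fin d, (1 - c k ≠ 0) ↔ (d - r ≤ ((sp.symm k : Fin d) : ℕ)) := by
      intro k
      simp only [hcdef]
      split_ifs with h
      · simp; omega
      · simp; omega
    calc Fintype.card {k // 1 - c k ≠ 0}
        = Fintype.card {k : Fin d // d - r ≤ ((sp.symm k : Fin d) : ℕ)} := by
          apply Fintype.card_congr
          exact Equiv.subtypeEquiv (Equiv.refl _) (fun k => by rw [this]; rfl)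
      _ ≤ r := by
          have hinj : Function.Injective
              (fun k : {k : Fin d // d - r ≤ ((sp.symm k : Fin d) : ℕ)} =>
                (⟨((sp.symm k.1 : Fin d) : ℕ) - (d - r), by
                  have h1 := k.2
                  have h2 := (sp.symm k.1).isLt
                  omega⟩ : Fin r)) := by
            intro a b hab
            simp only [Fin.mk.injEq] at hab
            have h1 := a.2; have h2 := b.2
            have : (sp.symm a.1 : ℕ) = (sp.symm b.1 : ℕ) := by omega
            have : sp.symm a.1 = sp.symm b.1 := Fin.ext this
            have := sp.symm.injective this
            exact Subtype.ext this
          simpa using Fintype.card_le_of_injective _ hinj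
  · -- Frobenius computation
    have hMQ : M - M * (U * Matrix.diagonal (fun k => 1 - c k) * star U) = M * Q := by
      have hd1 : Matrix.diagonal (fun k => 1 - c k) = 1 - Matrix.diagonal c := by
        rw [← Matrix.diagonal_one, ← Matrix.diagonal_sub]
      rw [hd1, Matrix.mul_sub, Matrix.sub_mul, Matrix.mul_sub, Matrix.mul_one, hU1, Matrix.mul_one]
      rw [hQdef]
      noncomm_ring
    rw [hMQ]
    -- trace identity
    have htr : ∑ i, ∑ j, ((M * Q) i j) ^ 2 = Matrix.trace ((M * Q)ᵀ * (M * Q)) := by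
      simp only [Matrix.trace, Matrix.diag, Matrix.mul_apply, Matrix.transpose_apply, sq]
      rw [Finset.sum_comm]
    rw [htr]
    have hQsymm : Qᵀ = Q := by
      rw [hQdef]
      simp [Matrix.transpose_mul, Matrix.star_eq_conjTranspose,
        Matrix.conjTranspose_eq_transpose_of_trivial, Matrix.diagonal_transpose, Matrix.mul_assoc]
    have cancel : ∀ X : Matrix (Fin d) (Fin d) ℝ, star U * (U * X) = X := by
      intro X
      rw [← Matrix.mul_assoc, hU1', Matrix.one_mul]
    have hprod : (M * Q)ᵀ * (M * Q) = U * Matrix.diagonal (fun k => c k * lam k * c k) * star U := by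
      rw [Matrix.transpose_mul, hQsymm, Matrix.mul_assoc, ← Matrix.mul_assoc Mᵀ M Q, hspec]
      rw [hQdef]
      simp only [Matrix.mul_assoc, cancel]
      rw [← Matrix.diagonal_mul_diagonal, ← Matrix.diagonal_mul_diagonal]
      simp only [Matrix.mul_assoc]
    rw [hprod]
    have htr2 : Matrix.trace (U * Matrix.diagonal (fun k => c k * lam k * c k) * star U)
        = ∑ k, c k * lam k * c k := by
      rw [Matrix.trace_mul_cycle, hU1', Matrix.one_mul, Matrix.trace_diagonal]
    rw [htr2]
    -- reindex by sp
    have hstep : ∀ k, c k * lam k * c k = if ((sp.symm k : Fin d) : ℕ) < d - r then lam k else 0 := by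
      intro k
      simp only [hcdef]
      split_ifs <;> ring
    simp only [hstep]
    rw [← Equiv.sum_comp sp (fun k => if ((sp.symm k : Fin d) : ℕ) < d - r then lam k else 0)]
    simp only [Equiv.symm_apply_apply]
    -- now LHS = ∑ j, if (j:ℕ) < d - r then lam (sp j) else 0
    rw [← Finset.sum_filter]
    -- RHS
    have hev_nonneg : ∀ k, 0 ≤ lam k := by
      intro k
      have hps : (Mᵀ * M).PosSemidef := by
        have := Matrix.posSemidef_conjTranspose_mul_self M
        rwa [Matrix.conjTranspose_eq_transpose_of_trivial] at this
      exact hps.eigenvalues_nonneg k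
    have hsing : ∀ i : Fin d, (singularValues M i) ^ 2 = lam (sp i.rev) := by
      intro i
      rw [singularValues]
      exact Real.sq_sqrt (hev_nonneg _)
    calc ∑ j ∈ Finset.univ.filter (fun j : Fin d => (j : ℕ) < d - r), lam (sp j)
        = ∑ i ∈ Finset.univ.filter (fun i : Fin d => r ≤ (i : ℕ)), lam (sp i.rev) := by
          apply Finset.sum_equiv (Fin.revPerm : Equiv.Perm (Fin d))
          · intro j
            simp only [Finset.mem_filter, Finset.mem_univ, true_and, Fin.revPerm_apply,
              Fin.val_rev]
            have := j.isLt
            omega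
          · intro j _
            simp [Fin.rev_rev]
      _ = ∑ i ∈ Finset.univ.filter (fun i : Fin d => r ≤ (i : ℕ)), (singularValues M i) ^ 2 := by
          exact Finset.sum_congr rfl (fun i _ => (hsing i).symm)

/-- If the singular values of a real d×d matrix decay like
σ_i(M) ≤ C·i^(−α) (α > 1/2), then for every ε > 0 and every natural number
r ≥ (C²/((2α−1)·ε²))^(1/(2α−1)) there is a rank-≤r matrix Δ with ‖M − Δ‖_F ≤ ε.
(Here the index i : Fin d corresponds to the mathematical index i + 1.) -/
theorem rank_r_approximation_exists
    {d : ℕ} (hd : 1 ≤ d) (M : Matrix (Fin d) (Fin d) ℝ)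
    (C α : ℝ) (hC : 0 < C) (hα : 1 / 2 < α)
    (hdecay : ∀ i : Fin d, singularValues M i ≤ C * ((i : ℝ) + 1) ^ (-α)) :
    ∀ ε > (0 : ℝ), ∀ r : ℕ,
      (C ^ 2 / ((2 * α - 1) * ε ^ 2)) ^ (1 / (2 * α - 1)) ≤ (r : ℝ) →
      ∃ Δ : Matrix (Fin d) (Fin d) ℝ, Δ.rank ≤ r ∧ frobNorm (M - Δ) ≤ ε := by
  intro ε hε r hr
  set β := 2 * α - 1 with hβdef
  have hβ : 0 < β := by simp only [hβdef]; linarith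
  have hbase : 0 < C ^ 2 / (β * ε ^ 2) := by positivity
  have hrpow : 0 < (C ^ 2 / ((2 * α - 1) * ε ^ 2)) ^ (1 / (2 * α - 1)) :=
    Real.rpow_pos_of_pos hbase _
  have hr1 : 1 ≤ r := by
    by_contra h
    push_neg at h
    interval_cases r
    simp only [Nat.cast_zero] at hr
    linarith
  have hrpos : (0:ℝ) < (r:ℝ) := by exact_mod_cast hr1
  have hkey : C ^ 2 / (β * ε ^ 2) ≤ (r:ℝ) ^ β := by
    have h := Real.rpow_le_rpow hrpow.le hr hβ.le
    rwa [← Real.rpow_mul hbase.le, one_div_mul_cancel (ne_of_gt hβ), Real.rpow_one] at h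
  have hrβ : 0 < (r:ℝ) ^ β := Real.rpow_pos_of_pos hrpos β
  have h2 : C ^ 2 ≤ (r:ℝ) ^ β * (β * ε ^ 2) := (div_le_iff₀ (by positivity)).mp hkey
  have hfinal : C ^ 2 * ((r:ℝ) ^ (-β) / β) ≤ ε ^ 2 := by
    have hinv : (r:ℝ) ^ β * (r:ℝ) ^ (-β) = 1 := by
      rw [← Real.rpow_add hrpos]; simp
    have hrnβ : 0 < (r:ℝ) ^ (-β) := Real.rpow_pos_of_pos hrpos _
    have := mul_le_mul_of_nonneg_right h2 hrnβ.le
    have h3 : C ^ 2 * (r:ℝ) ^ (-β) ≤ β * ε ^ 2 := by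
      calc C ^ 2 * (r:ℝ) ^ (-β) ≤ (r:ℝ) ^ β * (β * ε ^ 2) * (r:ℝ) ^ (-β) := this
        _ = ((r:ℝ) ^ β * (r:ℝ) ^ (-β)) * (β * ε ^ 2) := by ring
        _ = β * ε ^ 2 := by rw [hinv]; ring
    calc C ^ 2 * ((r:ℝ) ^ (-β) / β) = (C ^ 2 * (r:ℝ) ^ (-β)) / β := by ring
      _ ≤ (β * ε ^ 2) / β := by gcongr
      _ = ε ^ 2 := by field_simp
  obtain ⟨Δ, hrank, hsum⟩ := exists_lowrank_aux M r
  refine ⟨Δ, hrank, ?_⟩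
  rw [frobNorm, hsum]
  -- bound the tail sum by ε ^ 2
  have htail : ∑ i ∈ Finset.univ.filter (fun i : Fin d => r ≤ (i : ℕ)), (singularValues M i) ^ 2
      ≤ ε ^ 2 := by
    have hterm : ∀ i ∈ Finset.univ.filter (fun i : Fin d => r ≤ (i : ℕ)),
        (singularValues M i) ^ 2 ≤ C ^ 2 * (((i:ℝ)) + 1) ^ (-(β + 1)) := by
      intro i _
      have hpos : (0:ℝ) < (i:ℝ) + 1 := by positivity
      have hsq : (C * (((i:ℝ)) + 1) ^ (-α)) ^ 2 = C ^ 2 * (((i:ℝ)) + 1) ^ (-(β + 1)) := by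
        have : ((((i:ℝ)) + 1) ^ (-α)) ^ 2 = (((i:ℝ)) + 1) ^ (-(β + 1)) := by
          rw [sq, ← Real.rpow_add hpos]
          congr 1
          simp only [hβdef]; ring
        rw [mul_pow, this]
      rw [← hsq]
      have h0 : 0 ≤ singularValues M i := Real.sqrt_nonneg _
      exact pow_le_pow_left₀ h0 (hdecay i) 2
    calc ∑ i ∈ Finset.univ.filter (fun i : Fin d => r ≤ (i : ℕ)), (singularValues M i) ^ 2
        ≤ ∑ i ∈ Finset.univ.filter (fun i : Fin d => r ≤ (i : ℕ)),
            C ^ 2 * (((i:ℝ)) + 1) ^ (-(β + 1)) := Finset.sum_le_sum hterm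
      _ = C ^ 2 * ∑ n ∈ Finset.Ico r d, ((n:ℝ) + 1) ^ (-(β + 1)) := by
          rw [← Finset.mul_sum]
          congr 1
          rw [Finset.sum_filter,
            Fin.sum_univ_eq_sum_range (fun n : ℕ => if r ≤ n then ((n:ℝ) + 1) ^ (-(β + 1)) else 0) d,
            ← Finset.sum_filter]
          congr 1
          ext n
          simp only [Finset.mem_filter, Finset.mem_range, Finset.mem_Ico]
          omega
      _ ≤ C ^ 2 * ((r:ℝ) ^ (-β) / β) := by
          have := aux_tail β hβ r d hr1
          exact mul_le_mul_of_nonneg_left this (by positivity)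
      _ ≤ ε ^ 2 := hfinal
  calc Real.sqrt (∑ i ∈ Finset.univ.filter (fun i : Fin d => r ≤ (i : ℕ)), (singularValues M i) ^ 2)
      ≤ Real.sqrt (ε ^ 2) := Real.sqrt_le_sqrt htail
    _ = ε := Real.sqrt_sq hε.le
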